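/- If G is a connected locally Dirac graph of order n ≥ 4, then G is 3-connected. -/

import Mathlib

noncomputable def locDeg {V : Type*} (G : SimpleGraph V) (v u : V) : ℕ :=
  (G.neighborSet v ∩ G.neighborSet u).ncard

noncomputable def degN {V : Type*} (G : SimpleGraph V) (v : V) : ℕ :=
  (G.neighborSet v).ncard

/-- `G` is locally Dirac: every vertex of `⟨N(v)⟩` has degree at least `deg_G(v)/2` there. -/
def LocallyDirac {V : Type*} (G : SimpleGraph V) : Prop :=
  ∀ v u : V, G.Adj v u → degN G v ≤ 2 * locDeg G v u

section Aux

variable {V : Type*} [Fintype V] {G : SimpleGraph V}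

lemma three_elt {S : Set V} (hS : S.ncard ≤ 2) {a b c : V} (ha : a ∈ S) (hb : b ∈ S)
    (hc : c ∈ S) (hab : a ≠ b) (hcb : c ≠ b) : c = a := by
  by_contra hca
  have hsub : ({a, b, c} : Set V) ⊆ S := by
    intro x hx
    simp only [Set.mem_insert_iff, Set.mem_singleton_iff] at hx
    rcases hx with rfl | rfl | rfl <;> assumption
  have h3 : ({a, b, c} : Set V).ncard = 3 := by
    rw [Set.ncard_insert_of_notMem (by simp [hab, Ne.symm hca]) (Set.toFinite _),
        Set.ncard_insert_of_notMem (by simp [Ne.symm hcb]) (Set.toFinite _),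
        Set.ncard_singleton]
  have := Set.ncard_le_ncard hsub S.toFinite
  omega

lemma exists_pair {S : Set V} (hS : S.ncard ≤ 2) {s : V} (hs : s ∈ S) :
    ∃ z ∈ S, ∀ x ∈ S, x = s ∨ x = z := by
  by_cases h : ∃ z ∈ S, z ≠ s
  · obtain ⟨z, hz, hzs⟩ := h
    refine ⟨z, hz, fun x hx => ?_⟩
    by_cases hxs : x = s
    · exact Or.inl hxs
    · exact Or.inr (three_elt hS hz hs hx hzs hxs)
  · push_neg at h
    exact ⟨s, hs, fun x hx => Or.inl (h x hx)⟩

lemma lemL (hd : LocallyDirac G) {s u w z : V} (hsu : G.Adj s u) (hsw : G.Adj s w)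
    (huw : u ≠ w) (huz : u ≠ z) (hwz : w ≠ z) (hnadj : ¬ G.Adj u w) :
    ∃ t, G.Adj s t ∧ G.Adj u t ∧ G.Adj w t ∧ t ≠ z := by
  by_contra hcon
  push_neg at hcon
  set A := G.neighborSet s ∩ G.neighborSet u with hA
  set B := G.neighborSet s ∩ G.neighborSet w with hB
  have hdA : degN G s ≤ 2 * A.ncard := hd s u hsu
  have hdB : degN G s ≤ 2 * B.ncard := hd s w hsw
  have hABz : A ∩ B ⊆ {z} := by
    rintro t ⟨⟨hts, htu⟩, _, htw⟩
    simp only [SimpleGraph.mem_neighborSet] at hts htu htw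
    exact hcon t hts htu htw
  have hABsub : A ∪ B ⊆ G.neighborSet s \ {u, w} := by
    rintro t (⟨hts, htu⟩ | ⟨hts, htw⟩)
    · refine ⟨hts, ?_⟩
      simp only [SimpleGraph.mem_neighborSet] at htu
      simp only [Set.mem_insert_iff, Set.mem_singleton_iff]
      push_neg
      refine ⟨?_, ?_⟩ <;> rintro rfl
      · exact G.irrefl htu
      · exact hnadj htu
    · refine ⟨hts, ?_⟩
      simp only [SimpleGraph.mem_neighborSet] at htw
      simp only [Set.mem_insert_iff, Set.mem_singleton_iff]
      push_neg
      refine ⟨?_, ?_⟩ <;> rintro rfl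
      · exact hnadj (G.adj_symm htw)
      · exact G.irrefl htw
  have huwmem : ({u, w} : Set V) ⊆ G.neighborSet s := by
    rintro t (rfl | rfl)
    · exact hsu
    · exact hsw
  have hcard_uw : ({u, w} : Set V).ncard = 2 := Set.ncard_pair huw
  have hdiff : (G.neighborSet s \ {u, w}).ncard = degN G s - 2 := by
    rw [Set.ncard_diff huwmem (Set.toFinite _), hcard_uw]; rfl
  have h2d : 2 ≤ degN G s := by
    have := Set.ncard_le_ncard huwmem (Set.toFinite _)
    rw [hcard_uw] at this
    exact this
  have hU : (A ∪ B).ncard ≤ degN G s - 2 := by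
    rw [← hdiff]
    exact Set.ncard_le_ncard hABsub (Set.toFinite _)
  have hI : (A ∩ B).ncard ≤ 1 := by
    have := Set.ncard_le_ncard hABz (Set.toFinite _)
    simpa using this
  have hsum : (A ∪ B).ncard + (A ∩ B).ncard = A.ncard + B.ncard :=
    Set.ncard_union_add_ncard_inter A B (Set.toFinite _) (Set.toFinite _)
  omega

lemma induce_adj' {S : Set V} {u w : V} (hu : u ∉ S) (hw : w ∉ S) (h : G.Adj u w) :
    (G.induce Sᶜ).Adj ⟨u, hu⟩ ⟨w, hw⟩ := by
  simpa using h

lemma reach_nbr (hd : LocallyDirac G) {S : Set V} (hS : S.ncard ≤ 2) {s u w : V}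
    (hs : s ∈ S) (hu : u ∉ S) (hw : w ∉ S) (hsu : G.Adj s u) (hsw : G.Adj s w) :
    (G.induce Sᶜ).Reachable ⟨u, hu⟩ ⟨w, hw⟩ := by
  by_cases huw : u = w
  · subst huw; exact SimpleGraph.Reachable.refl _
  by_cases hadj : G.Adj u w
  · exact (induce_adj' hu hw hadj).reachable
  obtain ⟨z, hz, hzP⟩ := exists_pair hS hs
  have huz : u ≠ z := fun h => hu (h ▸ hz)
  have hwz : w ≠ z := fun h => hw (h ▸ hz)
  obtain ⟨t, hst, hut, hwt, htz⟩ := lemL hd hsu hsw huw huz hwz hadj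
  have htS : t ∉ S := by
    intro htS
    rcases hzP t htS with rfl | rfl
    · exact G.irrefl hst
    · exact htz rfl
  exact ((induce_adj' hu htS hut).reachable).trans (induce_adj' htS hw (G.adj_symm hwt)).reachable

lemma reach_nbr2 (hd : LocallyDirac G) {S : Set V} (hS : S.ncard ≤ 2) {s s' u w : V}
    (hs : s ∈ S) (hs' : s' ∈ S) (hss' : G.Adj s s') (hu : u ∉ S) (hw : w ∉ S)
    (hsu : G.Adj s u) (hs'w : G.Adj s' w) :
    (G.induce Sᶜ).Reachable ⟨u, hu⟩ ⟨w, hw⟩ := by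
  by_cases hus' : G.Adj s' u
  · exact reach_nbr hd hS hs' hu hw hus' hs'w
  · have hus'ne : u ≠ s' := fun h => hu (h ▸ hs')
    have hnadj : ¬ G.Adj u s' := fun h => hus' (G.adj_symm h)
    obtain ⟨t, hst, hut, hs't, hts⟩ :=
      lemL hd hsu hss' hus'ne (G.ne_of_adj (G.adj_symm hsu)) (G.ne_of_adj (G.adj_symm hss')) hnadj
    have htS : t ∉ S := by
      intro htS
      have : ∀ x ∈ S, x = s ∨ x = s' := by
        intro x hx
        by_cases hxs : x = s
        · exact Or.inl hxs
        · exact Or.inr (three_elt hS hs' hs hx (G.ne_of_adj (G.adj_symm hss')) hxs)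
      rcases this t htS with rfl | rfl
      · exact G.irrefl hst
      · exact G.irrefl hs't
    exact ((induce_adj' hu htS hut).reachable).trans
      (reach_nbr hd hS hs' htS hw hs't hs'w)

lemma key (hd : LocallyDirac G) {S : Set V} (hS : S.ncard ≤ 2) :
    ∀ n : ℕ, ∀ {x y : V} (p : G.Walk x y), p.length ≤ n → ∀ (hx : x ∉ S) (hy : y ∉ S),
      (G.induce Sᶜ).Reachable ⟨x, hx⟩ ⟨y, hy⟩ := by
  intro n
  induction n with
  | zero =>
    intro x y p hp hx hy
    cases p with
    | nil => exact SimpleGraph.Reachable.refl _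
    | cons h q => simp [SimpleGraph.Walk.length_cons] at hp
  | succ n ih =>
    intro x y p hp hx hy
    cases p with
    | nil => exact SimpleGraph.Reachable.refl _
    | cons h q =>
      rename_i b
      simp only [SimpleGraph.Walk.length_cons] at hp
      by_cases hb : b ∈ S
      · cases q with
        | nil => exact absurd hb hy
        | cons h2 r =>
          rename_i c
          simp only [SimpleGraph.Walk.length_cons] at hp
          by_cases hcS : c ∈ S
          · cases r with
            | nil => exact absurd hcS hy
            | cons h3 r2 =>
              rename_i d
              simp only [SimpleGraph.Walk.length_cons] at hp
              by_cases hdS : d ∈ S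
              · have hdb : d = b :=
                  three_elt hS hb hcS hdS (G.ne_of_adj h2) (G.ne_of_adj (G.adj_symm h3))
                subst hdb
                exact ih (SimpleGraph.Walk.cons h r2)
                  (by simp only [SimpleGraph.Walk.length_cons]; omega) hx hy
              · exact (reach_nbr2 hd hS hb hcS h2 hx hdS (G.adj_symm h) h3).trans
                  (ih r2 (by omega) hdS hy)
          · exact (reach_nbr hd hS hb hx hcS (G.adj_symm h) h2).trans
              (ih r (by omega) hcS hy)
      · exact ((induce_adj' hx hb h).reachable).trans (ih q (by omega) hb hy)

end Aux

/-- Every connected locally Dirac graph of order `n ≥ 4` is 3-connected: it has more than 3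
vertices and removing any set of at most 2 vertices leaves a connected graph. -/
theorem stmt3 {V : Type*} [Fintype V] (G : SimpleGraph V) (hc : G.Connected)
    (hd : LocallyDirac G) (h4 : 4 ≤ Fintype.card V) :
    3 < Fintype.card V ∧ ∀ S : Set V, S.ncard ≤ 2 → (G.induce Sᶜ).Connected := by
  refine ⟨by omega, fun S hS => ?_⟩
  have hne : ∃ x, x ∉ S := by
    by_contra hc'
    push_neg at hc'
    have hu : S = Set.univ := Set.eq_univ_of_forall hc'
    rw [hu, Set.ncard_univ, Nat.card_eq_fintype_card] at hS
    omega
  obtain ⟨x0, hx0⟩ := hne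
  rw [SimpleGraph.connected_iff]
  refine ⟨?_, ⟨⟨x0, hx0⟩⟩⟩
  rintro ⟨x, hx⟩ ⟨y, hy⟩
  obtain ⟨p⟩ := hc.preconnected x y
  exact key hd hS p.length p le_rfl hx hy
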